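/- arXiv:1607.04343 — 3 statements merged into one kernel-verified Lean document; each statement's English description precedes it below -/
import Mathlib

section
/- A map p : X → S of simplicial sets is an inner fibration if and only if for every n ≥ 0 and every n-simplex σ : Δⁿ → S, the pullback X ×_{S,σ} Δⁿ is a quasicategory. -/
open CategoryTheory Simplicial SSet Opposite

universe v u

namespace InnerFibAux

open SimplexCategory

/-- Pointwise extensionality for simplices of the standard simplex. -/
lemma stdExt {n : ℕ} {m : SimplexCategoryᵒᵖ} {α β : (Δ[n] : SSet.{u}).obj m}
    (h : ∀ k, α.down.toOrderHom k = β.down.toOrderHom k) : α = β := by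
  apply ULift.ext
  apply SimplexCategory.Hom.ext
  exact OrderHom.ext _ _ (funext h)

/-- The standard simplices satisfy the strict Segal condition. -/
noncomputable def strictSegalStd (n : ℕ) : SSet.StrictSegal (Δ[n] : SSet.{u}) where
  spineToSimplex {m} f :=
    stdSimplex.objMk
      { toFun := fun k => (f.vertex k).down.toOrderHom 0
        monotone' := by
          rw [Fin.monotone_iff_le_succ]
          intro i
          have hsrc : (f.arrow i).down.toOrderHom 0 =
              (f.vertex i.castSucc).down.toOrderHom 0 :=
            congrArg (fun x => x.down.toOrderHom 0) (f.arrow_src i)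
          have htgt : (f.arrow i).down.toOrderHom 1 =
              (f.vertex i.succ).down.toOrderHom 0 :=
            congrArg (fun x => x.down.toOrderHom 0) (f.arrow_tgt i)
          dsimp only
          rw [← hsrc, ← htgt]
          exact (f.arrow i).down.toOrderHom.monotone (Fin.zero_le 1) }
  spine_spineToSimplex m := by
    funext f
    ext i : 2
    · apply stdExt
      intro k
      match k with
      | (0 : Fin 1) => rfl
    · apply stdExt
      intro k
      have hsrc : (f.arrow i).down.toOrderHom 0 =
          (f.vertex i.castSucc).down.toOrderHom 0 :=
        congrArg (fun x => x.down.toOrderHom 0) (f.arrow_src i)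
      have htgt : (f.arrow i).down.toOrderHom 1 =
          (f.vertex i.succ).down.toOrderHom 0 :=
        congrArg (fun x => x.down.toOrderHom 0) (f.arrow_tgt i)
      match k with
      | (0 : Fin 2) => exact hsrc.symm
      | (1 : Fin 2) => exact htgt.symm
  spineToSimplex_spine m := by
    funext α
    apply stdExt
    intro k
    rfl

/-- Every simplex of `Δ[n]` is a pullback of the generic simplex. -/
lemma std_simplex_eq {n : ℕ} {m : SimplexCategoryᵒᵖ} (α : (Δ[n] : SSet.{u}).obj m) :
    α = (Δ[n] : SSet.{u}).map (stdSimplex.objEquiv α).op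
      (stdSimplex.objEquiv.symm (𝟙 ⦋n⦌)) :=
  stdExt (fun _ => rfl)

/-- Maps out of a standard simplex are determined by their value on the generic simplex. -/
lemma std_hom_ext {n : ℕ} {T : SSet.{u}} {g₁ g₂ : Δ[n] ⟶ T}
    (h : g₁.app (op ⦋n⦌) (stdSimplex.objEquiv.symm (𝟙 ⦋n⦌)) = g₂.app (op ⦋n⦌) (stdSimplex.objEquiv.symm (𝟙 ⦋n⦌))) :
    g₁ = g₂ := by
  ext m α
  rw [std_simplex_eq α]
  have h₁ := ConcreteCategory.congr_hom (g₁.naturality (stdSimplex.objEquiv α).op)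
    (stdSimplex.objEquiv.symm (𝟙 ⦋n⦌))
  have h₂ := ConcreteCategory.congr_hom (g₂.naturality (stdSimplex.objEquiv α).op)
    (stdSimplex.objEquiv.symm (𝟙 ⦋n⦌))
  dsimp at h₁ h₂
  exact h₁.trans ((congrArg _ h).trans h₂.symm)

/-- A self-map of `Δ[n]` which restricts to the identity on a horn is the identity,
provided `n ≥ 2`. -/
lemma eq_id_of_horn {n : ℕ} {i : Fin (n + 1)} (h2 : 2 ≤ n)
    (g : Δ[n] ⟶ (Δ[n] : SSet.{u}))
    (hg : (horn n i).ι ≫ g = (horn n i).ι) : g = 𝟙 Δ[n] := by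
  obtain ⟨m, rfl⟩ : ∃ m, n = m + 2 := ⟨n - 2, by omega⟩
  apply std_hom_ext
  apply stdExt
  intro k0
  obtain ⟨j, hji, hjk⟩ : ∃ j : Fin (m + 3), j ≠ i ∧ j ≠ (show Fin (m + 3) from k0) := by
    set k := (show Fin (m + 3) from k0) with hkdef
    by_contra hcon
    push_neg at hcon
    have h : ∀ j : Fin (m + 3), j = i ∨ j = k := fun j => or_iff_not_imp_left.2 (hcon j)
    have e0 := h ⟨0, by omega⟩
    have e1 := h ⟨1, by omega⟩
    have e2 := h ⟨2, by omega⟩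
    rcases e0 with e0 | e0 <;> rcases e1 with e1 | e1 <;> rcases e2 with e2 | e2 <;>
      simp_all [Fin.ext_iff] <;> omega
  set k : Fin (m + 3) := (show Fin (m + 3) from k0) with hkdef
  obtain ⟨l, hl⟩ := Fin.exists_succAbove_eq (Ne.symm hjk)
  have hface : g.app (op ⦋m + 1⦌) ((horn.face i j hji).1) = (horn.face i j hji).1 :=
    congrFun (congrArg (fun t => t.app (op ⦋m + 1⦌)) hg) (horn.face i j hji)
  have hfδ : ((horn.face i j hji).1 : (Δ[m + 2] : SSet.{u}).obj (op ⦋m + 1⦌)) =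
      (Δ[m + 2] : SSet.{u}).map (SimplexCategory.δ j).op (stdSimplex.objEquiv.symm (𝟙 ⦋m + 2⦌)) :=
    stdExt (fun _ => rfl)
  have hnat := ConcreteCategory.congr_hom (g.naturality (SimplexCategory.δ j).op) (stdSimplex.objEquiv.symm (𝟙 ⦋m + 2⦌))
  dsimp at hnat
  rw [hfδ, hnat] at hface
  have key := congrArg (fun x => x.down.toOrderHom l) hface
  have key' : (g.app (op ⦋m + 2⦌) (stdSimplex.objEquiv.symm (𝟙 ⦋m + 2⦌))).down.toOrderHom
        ((SimplexCategory.δ j).toOrderHom l) =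
      (stdSimplex.objEquiv.{u}.symm (𝟙 ⦋m + 2⦌)).down.toOrderHom ((SimplexCategory.δ j).toOrderHom l) :=
    key
  have hδ : (SimplexCategory.δ j).toOrderHom l = k := hl
  rw [hδ] at key'
  exact key'

instance quasicategoryStd (n : ℕ) : Quasicategory (Δ[n] : SSet.{u}) :=
  (strictSegalStd n).quasicategory

end InnerFibAux

/-- An *inner fibration* is a map of simplicial sets with the right lifting property
with respect to the inner horn inclusions `Λ[n, i] ↪ Δ[n]` for `n ≥ 2` and `0 < i < n`. -/
def IsInnerFibration {X S : SSet.{u}} (p : X ⟶ S) : Prop :=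
  ∀ ⦃n : ℕ⦄ ⦃i : Fin (n + 1)⦄, 2 ≤ n → 0 < (i : ℕ) → (i : ℕ) < n →
    HasLiftingProperty (horn n i).ι p

/-- A map `p : X ⟶ S` of simplicial sets is an inner fibration if and only if for
every `n ≥ 0` and every `n`-simplex `σ : Δ[n] ⟶ S`, the pullback `X ×_S Δ[n]` is a
quasicategory. -/
theorem isInnerFibration_iff_pullback_quasicategory {X S : SSet.{u}} (p : X ⟶ S) :
    IsInnerFibration p ↔
      ∀ (n : ℕ) (σ : Δ[n] ⟶ S), Quasicategory (Limits.pullback p σ) := by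
  constructor
  · intro hp n σ
    constructor
    intro m j σ₀ h0 hn
    -- fill the horn in the base `Δ[n]`
    obtain ⟨β, hβ⟩ := Quasicategory.hornFilling h0 hn (σ₀ ≫ Limits.pullback.snd p σ)
    have h0' : 0 < (j : ℕ) := h0
    have hn' : (j : ℕ) < m + 2 := hn
    haveI := hp (by omega : 2 ≤ m + 2) h0' hn'
    have hsq : (σ₀ ≫ Limits.pullback.fst p σ) ≫ p = (horn (m + 2) j).ι ≫ β ≫ σ := by
      rw [Category.assoc, Limits.pullback.condition, ← Category.assoc, hβ, Category.assoc]
    have sq : CommSq (σ₀ ≫ Limits.pullback.fst p σ) ((horn (m + 2) j).ι) p (β ≫ σ) :=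
      ⟨hsq⟩
    refine ⟨Limits.pullback.lift sq.lift β sq.fac_right, ?_⟩
    apply Limits.pullback.hom_ext
    · rw [Category.assoc, Limits.pullback.lift_fst, sq.fac_left]
    · rw [Category.assoc, Limits.pullback.lift_snd, hβ]
  · intro h n i h2 h0 hn
    constructor
    intro u v sq
    haveI := h n v
    have h0' : 0 < i := by rwa [Fin.lt_iff_val_lt_val]
    have hn' : i < Fin.last n := by rwa [Fin.lt_iff_val_lt_val]
    obtain ⟨f, hf⟩ := Quasicategory.hornFilling h0' hn'
      (Limits.pullback.lift u ((horn n i).ι) sq.w)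
    have hsnd : f ≫ Limits.pullback.snd p v = 𝟙 Δ[n] := by
      apply InnerFibAux.eq_id_of_horn h2
      rw [← Category.assoc, ← hf, Limits.pullback.lift_snd]
    exact ⟨⟨⟨f ≫ Limits.pullback.fst p v,
      by rw [← Category.assoc, ← hf, Limits.pullback.lift_fst],
      by rw [Category.assoc, Limits.pullback.condition, ← Category.assoc, hsnd,
        Category.id_comp]⟩⟩⟩
end

section
/- If X is a quasicategory and D is an ordinary category, then any map of simplicial sets X → N(D) is an inner fibration. -/
open CategoryTheory Simplicial SSet Opposite

universe v u

/-- The spine of the simplex classified by a map `Δ[n+2] ⟶ Y` is the image of the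
spine of the inner horn. -/
lemma spine_app_id_eq {Y : SSet.{u}} {m : ℕ} {i : Fin (m + 3)}
    (h₀ : 0 < i) (hₙ : i < Fin.last (m + 2)) (h : Δ[m + 2] ⟶ Y) :
    Y.spine (m + 2) (h.app _ (yonedaEquiv (𝟙 Δ[m + 2]))) =
      (horn.spineId i h₀ hₙ).map ((horn (m + 2) i).ι ≫ h) := by
  ext k
  dsimp only [spine_arrow, SSet.Path.map, NatTrans.comp_app, types_comp_apply]
  rw [← types_comp_apply (h.app _) (Y.map _), ← h.naturality]
  rfl

/-- If `X` is a quasicategory and `D` is an ordinary category, then any map of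
simplicial sets `X ⟶ N(D)` is an inner fibration. -/
theorem isInnerFibration_to_nerve {D : Type u} [Category.{v} D]
    (X : SSet.{max u v}) [Quasicategory X] (p : X ⟶ nerve D) :
    IsInnerFibration p := by
  intro n i h2 h0 hn
  obtain ⟨m, rfl⟩ : ∃ m, n = m + 2 := ⟨n - 2, by omega⟩
  have h0' : 0 < i := by
    exact Fin.lt_iff_val_lt_val.mpr (by rw [Fin.val_zero]; exact h0)
  have hn' : i < Fin.last (m + 2) := by
    simpa [Fin.lt_iff_val_lt_val] using hn
  constructor
  intro f g sq
  obtain ⟨σ, hσ⟩ := Quasicategory.hornFilling h0' hn' f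
  refine ⟨⟨⟨σ, hσ.symm, ?_⟩⟩⟩
  -- It suffices to show the two classifying simplices agree.
  have key : (σ ≫ p).app _ (yonedaEquiv (𝟙 Δ[m + 2])) =
      g.app _ (yonedaEquiv (𝟙 Δ[m + 2])) := by
    apply (StrictSegal.ofIsStrictSegal (nerve D)).spineInjective
    show (nerve D).spine _ _ = (nerve D).spine _ _
    rw [spine_app_id_eq h0' hn' (σ ≫ p), spine_app_id_eq h0' hn' g]
    have : (horn (m + 2) i).ι ≫ σ ≫ p = (horn (m + 2) i).ι ≫ g := by
      rw [← Category.assoc, ← hσ, sq.w]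
    rw [this]
  -- Conclude by the Yoneda lemma.
  apply SSet.yonedaEquiv.injective
  exact key
end

section
/- For a quasicategory C and an object x ∈ C₀, the projection from the overcategory C_{/x} → C is a right fibration. -/
open CategoryTheory Simplicial SSet Opposite

universe v u

/-- A *right fibration* is a map of simplicial sets with the right lifting property
with respect to the horn inclusions `Λ[n, i] ↪ Δ[n]` for `n ≥ 1` and `0 < i ≤ n`. -/
def IsRightFibration {X S : SSet.{u}} (p : X ⟶ S) : Prop :=
  ∀ ⦃n : ℕ⦄ ⦃i : Fin (n + 1)⦄, 1 ≤ n → 0 < (i : ℕ) →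
    HasLiftingProperty (Λ[n, i].ι) p


/-- The "cocone" of a morphism of the simplex category: `[a.len+1] ⟶ [b.len+1]`
sending the last vertex to the last vertex and `i ↦ ψ(i)` otherwise. -/
def coconeHom {a b : SimplexCategory} (ψ : a ⟶ b) :
    (⦋a.len + 1⦌ : SimplexCategory) ⟶ ⦋b.len + 1⦌ :=
  SimplexCategory.Hom.mk
    { toFun := Fin.lastCases (Fin.last _) (fun i => (ψ.toOrderHom i).castSucc)
      monotone' := by
        intro x y h
        induction x using Fin.lastCases with
        | last =>
          rw [Fin.last_le_iff] at h
          subst h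
          exact le_refl _
        | cast i =>
          induction y using Fin.lastCases with
          | last => simp [Fin.le_last]
          | cast j =>
            simp only [Fin.lastCases_castSucc]
            exact Fin.castSucc_le_castSucc_iff.mpr (ψ.toOrderHom.monotone
              (Fin.castSucc_le_castSucc_iff.mp h)) }

lemma coconeHom_id (a : SimplexCategory) :
    coconeHom (𝟙 a) = 𝟙 (⦋a.len + 1⦌ : SimplexCategory) := by
  apply SimplexCategory.Hom.ext
  apply OrderHom.ext
  funext i
  induction i using Fin.lastCases <;> simp [coconeHom]

lemma coconeHom_comp {a b c : SimplexCategory} (ψ : a ⟶ b) (ξ : b ⟶ c) :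
    coconeHom (ψ ≫ ξ) = coconeHom ψ ≫ coconeHom ξ := by
  apply SimplexCategory.Hom.ext
  apply OrderHom.ext
  funext i
  induction i using Fin.lastCases <;> ((simp [coconeHom]) <;> (dsimp only [DFunLike.coe]; simp))

lemma const_comp_coconeHom {a b : SimplexCategory} (ψ : a ⟶ b) :
    SimplexCategory.const ⦋0⦌ ⦋a.len + 1⦌ (Fin.last _) ≫ coconeHom ψ =
      SimplexCategory.const ⦋0⦌ ⦋b.len + 1⦌ (Fin.last _) := by
  apply SimplexCategory.Hom.ext
  apply OrderHom.ext
  funext i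
  (simp [coconeHom, SimplexCategory.const]) <;> (dsimp only [DFunLike.coe]; simp)

/-- The inclusion `a ⟶ [a.len+1]` sending `i ↦ i` (the face opposite the last vertex). -/
def coconeIncl (a : SimplexCategory) : a ⟶ ⦋a.len + 1⦌ :=
  SimplexCategory.Hom.mk ⟨Fin.castSucc, fun _ _ h => Fin.castSucc_le_castSucc_iff.mpr h⟩

lemma coconeIncl_naturality {a b : SimplexCategory} (ψ : a ⟶ b) :
    coconeIncl a ≫ coconeHom ψ = ψ ≫ coconeIncl b := by
  apply SimplexCategory.Hom.ext
  apply OrderHom.ext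
  funext i
  (simp [coconeHom, coconeIncl]) <;> (dsimp only [DFunLike.coe]; simp)

/-- The overcategory `C_{/x}`: its `n`-simplices are the `(n+1)`-simplices of `C`
whose final vertex is `x`. -/
def over' (C : SSet.{u}) (x : C _⦋0⦌) : SSet.{u} where
  obj Δ := { σ : C.obj (op ⦋Δ.unop.len + 1⦌) //
    C.map (SimplexCategory.const ⦋0⦌ ⦋Δ.unop.len + 1⦌ (Fin.last _)).op σ = x }
  map φ := TypeCat.ofHom fun σ => ⟨C.map (coconeHom φ.unop).op σ.1, by
    rw [← FunctorToTypes.map_comp_apply, ← op_comp, const_comp_coconeHom]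
    exact σ.2⟩
  map_id Δ := by
    refine ConcreteCategory.hom_ext _ _ fun σ => ?_
    refine Subtype.ext ?_
    show C.map (coconeHom (𝟙 Δ.unop)).op σ.1 = σ.1
    rw [coconeHom_id]
    simp
  map_comp φ ξ := by
    refine ConcreteCategory.hom_ext _ _ fun σ => ?_
    refine Subtype.ext ?_
    show C.map (coconeHom (ξ.unop ≫ φ.unop)).op σ.1 = _
    rw [coconeHom_comp, op_comp, FunctorToTypes.map_comp_apply]
    rfl

/-- The forgetful projection `C_{/x} ⟶ C`. -/
def overProj (C : SSet.{u}) (x : C _⦋0⦌) : over' C x ⟶ C where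
  app Δ := TypeCat.ofHom fun σ => C.map (coconeIncl Δ.unop).op σ.1
  naturality Δ₁ Δ₂ φ := by
    refine ConcreteCategory.hom_ext _ _ fun σ => ?_
    show C.map (coconeIncl Δ₂.unop).op (C.map (coconeHom φ.unop).op σ.1) =
      C.map φ (C.map (coconeIncl Δ₁.unop).op σ.1)
    rw [← FunctorToTypes.map_comp_apply, ← op_comp, coconeIncl_naturality,
      op_comp, FunctorToTypes.map_comp_apply]
    rfl



/-- The generic simplex of `Δ[n]`. -/
def SSet.stdSimplex.id (n : ℕ) : Δ[n] _⦋n⦌ := stdSimplex.objEquiv.symm (𝟙 _)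

lemma SSet.stdSimplex.objEquiv_id (n : ℕ) : stdSimplex.objEquiv (stdSimplex.id n) = 𝟙 _ :=
  Equiv.apply_symm_apply _ _

namespace RFib

open SSet SimplexCategory stdSimplex

/-- The number of inputs of `φ` not mapped to the top element (an initial segment, by
monotonicity). -/
def cut {p q : ℕ} (φ : Fin (p+1) →o Fin (q+1)) : ℕ :=
  Nat.find (⟨p+1, fun k hk => absurd k.isLt (by omega)⟩ :
    ∃ t, ∀ k : Fin (p+1), t ≤ k.val → φ k = Fin.last q)

lemma cut_spec {p q : ℕ} {φ : Fin (p+1) →o Fin (q+1)} {k : Fin (p+1)}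
    (h : cut φ ≤ k.val) : φ k = Fin.last q :=
  Nat.find_spec (p := fun t => ∀ k : Fin (p+1), t ≤ k.val → φ k = Fin.last q) _ k h

lemma cut_le {p q : ℕ} (φ : Fin (p+1) →o Fin (q+1)) : cut φ ≤ p + 1 :=
  Nat.find_le (fun k hk => absurd k.isLt (by omega))

lemma lt_cut_iff {p q : ℕ} {φ : Fin (p+1) →o Fin (q+1)} {k : Fin (p+1)} :
    k.val < cut φ ↔ φ k ≠ Fin.last q := by
  constructor
  · intro h hlast
    have : cut φ ≤ k.val := Nat.find_le (fun j hj =>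
      le_antisymm (Fin.le_last _) (hlast ▸ φ.monotone (show k ≤ j from hj)))
    omega
  · intro h
    by_contra h'
    exact h (cut_spec (by omega))

/-- Every map from a standard simplex is determined by the image of the generic simplex. -/
lemma app_eq {C : SSet.{u}} {q : ℕ} (σ : Δ[q] ⟶ C) (m : SimplexCategoryᵒᵖ) (δ : Δ[q].obj m) :
    σ.app m δ = C.map ((objEquiv) δ).op (σ.app (op ⦋q⦌) (stdSimplex.id q)) := by
  have h : δ = Δ[q].map ((objEquiv) δ).op (stdSimplex.id q) := by
    apply (objEquiv).injective
    rw [stdSimplex.map_apply, Equiv.apply_symm_apply, stdSimplex.objEquiv_id,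
      Category.comp_id]
    rfl
  conv_lhs => rw [h]
  exact NatTrans.naturality_apply σ _ _

lemma horn_exists {q : ℕ} {j : Fin (q+1)} {m : SimplexCategoryᵒᵖ} (α : (Λ[q, j] : SSet).obj m) :
    ∃ w : Fin (q+1), (∀ k, asOrderHom α.1 k ≠ w) ∧ w ≠ j := by
  have h : Set.range (asOrderHom α.1) ∪ {j} ≠ Set.univ := α.2
  rw [Set.ne_univ_iff_exists_notMem] at h
  obtain ⟨w, hw⟩ := h
  refine ⟨w, fun k hk => hw (Or.inl ⟨k, hk⟩), fun h' => hw (Or.inr h')⟩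

lemma horn_mk {q : ℕ} {j : Fin (q+1)} {m : SimplexCategoryᵒᵖ} (δ : Δ[q].obj m) (w : Fin (q+1))
    (h1 : ∀ k, asOrderHom δ k ≠ w) (h2 : w ≠ j) :
    Set.range (asOrderHom δ) ∪ {j} ≠ Set.univ := by
  intro h
  have hw : w ∈ Set.range (asOrderHom δ) ∪ {j} := h.symm ▸ Set.mem_univ w
  rcases hw with ⟨k, hk⟩ | hw
  exacts [h1 k hk, h2 hw]

variable {n : ℕ}

/-- Forgetting the top element of the target. -/
def phiDown {p : ℕ} (φ : Fin (p+1) →o Fin (n+2)) (h : ∀ k, φ k ≠ Fin.last (n+1)) :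
    Fin (p+1) →o Fin (n+1) where
  toFun k := (φ k).castPred (h k)
  monotone' := show Monotone _ from fun a b hab => by
    have h' := φ.monotone hab
    rw [Fin.le_def] at h' ⊢
    simpa only [Fin.coe_castPred] using h'

/-- Restricting to the inputs below the cut. -/
def phiRes {p : ℕ} (φ : Fin (p+1) →o Fin (n+2)) (s : ℕ) (hs : s + 1 ≤ cut φ) :
    Fin (s+1) →o Fin (n+1) where
  toFun k := (φ ⟨k.val, by have := cut_le φ; have := k.isLt; omega⟩).castPred
    (lt_cut_iff.mp (show k.val < cut φ by have := k.isLt; omega))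
  monotone' := show Monotone _ from fun a b hab => by
    have h' := φ.monotone (show (⟨a.val, by have := cut_le φ; have := a.isLt; omega⟩ :
        Fin (p+1)) ≤ ⟨b.val, by have := cut_le φ; have := b.isLt; omega⟩ from
      Fin.mk_le_mk.mpr (Fin.le_def.mp hab))
    rw [Fin.le_def] at h' ⊢
    simpa only [Fin.coe_castPred] using h'

/-- The degeneracy collapsing everything past the cut. -/
def psiMap (p s : ℕ) : Fin (p+1) →o Fin (s+2) where
  toFun k := if h : k.val < s+1 then ⟨k.val, by omega⟩ else Fin.last (s+1)
  monotone' := show Monotone _ from fun a b hab => by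
    rw [Fin.le_def] at hab
    split_ifs with h1 h2 h2 <;> rw [Fin.le_def] <;> simp <;> omega

lemma phiRes_mem {i : Fin (n+1)} {m : SimplexCategoryᵒᵖ}
    (α : (Λ[n+1, i.castSucc] : SSet).obj m) {s : ℕ} (hs : s + 1 ≤ cut (asOrderHom α.1))
    (hcp : cut (asOrderHom α.1) ≤ m.unop.len) :
    Set.range (asOrderHom (objMk (n := ⦋n⦌) (m := op ⦋s⦌) (phiRes (asOrderHom α.1) s hs))) ∪ {i}
      ≠ Set.univ := by
  obtain ⟨w, hw1, hw2⟩ := horn_exists α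
  have hwlast : w ≠ Fin.last (n+1) := by
    intro h
    subst h
    exact hw1 ⟨m.unop.len, by omega⟩ (cut_spec (by simpa using hcp))
  apply horn_mk _ (w.castPred hwlast)
  · intro k hk
    apply hw1 ⟨k.val, by have hk' := k.isLt; simp only [unop_op, SimplexCategory.len_mk] at hk'; omega⟩
    have : asOrderHom (objMk (n := ⦋n⦌) (m := op ⦋s⦌) (phiRes (asOrderHom α.1) s hs)) k
        = phiRes (asOrderHom α.1) s hs k := rfl
    rw [this] at hk
    have := congrArg Fin.castSucc hk
    rwa [phiRes, OrderHom.coe_mk, Fin.castSucc_castPred, Fin.castSucc_castPred] at this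
  · intro h
    apply hw2
    rw [← Fin.castSucc_castPred w hwlast, h]

section

variable {C : SSet.{u}} {x : C _⦋0⦌} {i : Fin (n+1)}
variable (f : (Λ[n, i] : SSet) ⟶ over' C x) (g : Δ[n] ⟶ C)

/-- The generic simplex of `g`. -/
def gel : C.obj (op ⦋n⦌) := g.app (op ⦋n⦌) (stdSimplex.id n)

/-- The map `Λ[n+1, i] ⟶ C` assembled from `f`, `g` and `x`. -/
def hApp (m : SimplexCategoryᵒᵖ) (α : (Λ[n+1, i.castSucc] : SSet).obj m) : C.obj m :=
  if _h0 : cut (asOrderHom α.1) = 0 then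
    C.map (SimplexCategory.const m.unop ⦋0⦌ 0).op x
  else if hA : m.unop.len + 1 ≤ cut (asOrderHom α.1) then
    C.map (Quiver.Hom.op (SimplexCategory.Hom.mk (phiDown (asOrderHom α.1)
      (fun k => lt_cut_iff.mp (by have := k.isLt; omega))) : m.unop ⟶ ⦋n⦌)) (gel g)
  else
    C.map (Quiver.Hom.op (SimplexCategory.Hom.mk (psiMap m.unop.len (cut (asOrderHom α.1) - 1)) :
        m.unop ⟶ ⦋cut (asOrderHom α.1) - 1 + 1⦌))
      (f.app (op ⦋cut (asOrderHom α.1) - 1⦌)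
        ⟨objMk (phiRes (asOrderHom α.1) (cut (asOrderHom α.1) - 1) (by omega)),
         phiRes_mem α (by omega) (by omega)⟩).1

lemma hApp_spec0 {m : SimplexCategoryᵒᵖ} (α : (Λ[n+1, i.castSucc] : SSet).obj m)
    (h0 : cut (asOrderHom α.1) = 0) :
    hApp f g m α = C.map (SimplexCategory.const m.unop ⦋0⦌ 0).op x := by
  rw [hApp, dif_pos h0]

lemma hApp_specG {m : SimplexCategoryᵒᵖ} (α : (Λ[n+1, i.castSucc] : SSet).obj m)
    (hA : m.unop.len + 1 ≤ cut (asOrderHom α.1)) (h : ∀ k, asOrderHom α.1 k ≠ Fin.last (n+1)) :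
    hApp f g m α = C.map (Quiver.Hom.op (SimplexCategory.Hom.mk (phiDown (asOrderHom α.1) h) :
      m.unop ⟶ ⦋n⦌)) (gel g) := by
  rw [hApp, dif_neg (by omega), dif_pos hA]

lemma hApp_specF {m : SimplexCategoryᵒᵖ} (α : (Λ[n+1, i.castSucc] : SSet).obj m)
    (s : ℕ) (hc : cut (asOrderHom α.1) = s + 1) (hsp : s + 1 ≤ m.unop.len)
    (hs : s + 1 ≤ cut (asOrderHom α.1)) (hmem) :
    hApp f g m α = C.map (Quiver.Hom.op (SimplexCategory.Hom.mk (psiMap m.unop.len s) :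
        m.unop ⟶ ⦋s + 1⦌))
      (f.app (op ⦋s⦌) ⟨objMk (phiRes (asOrderHom α.1) s hs), hmem⟩).1 := by
  obtain rfl : s = cut (asOrderHom α.1) - 1 := by omega
  rw [hApp, dif_neg (by omega), dif_neg (by omega)]

end

lemma coconeHom_apply_castSucc {a b : SimplexCategory} (ψ : a ⟶ b) (k : Fin (a.len+1)) :
    (coconeHom ψ).toOrderHom k.castSucc = (ψ.toOrderHom k).castSucc := by
  (simp [coconeHom]) <;> (dsimp only [DFunLike.coe]; simp)

lemma coconeHom_apply_last {a b : SimplexCategory} (ψ : a ⟶ b) :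
    (coconeHom ψ).toOrderHom (Fin.last (a.len + 1)) = Fin.last (b.len + 1) := by
  (simp [coconeHom]) <;> (dsimp only [DFunLike.coe]; simp)

lemma coconeHom_apply_val {a b : SimplexCategory} (ψ : a ⟶ b) (u : Fin (a.len+2)) :
    ((coconeHom ψ).toOrderHom u).val =
      if h : u.val < a.len + 1 then (ψ.toOrderHom ⟨u.val, h⟩).val else b.len + 1 := by
  by_cases h : u.val < a.len + 1
  · rw [dif_pos h]
    conv_lhs => rw [show u = Fin.castSucc ⟨u.val, h⟩ from Fin.ext rfl]
    rw [coconeHom_apply_castSucc]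
    rfl
  · rw [dif_neg h]
    have hu : u = Fin.last (a.len+1) := Fin.ext (by
      simp only [Fin.val_last]
      have := u.isLt
      omega)
    rw [hu, coconeHom_apply_last]
    rfl

section

variable {C : SSet.{u}} {x : C _⦋0⦌} {i : Fin (n+1)}
variable (f : (Λ[n, i] : SSet) ⟶ over' C x) (g : Δ[n] ⟶ C)

lemma hApp_natural (hw : f ≫ overProj C x = Λ[n, i].ι ≫ g)
    (m m' : SimplexCategoryᵒᵖ) (ρ : m ⟶ m') (α : (Λ[n+1, i.castSucc] : SSet).obj m) :
    hApp f g m' ((Λ[n+1, i.castSucc] : SSet).map ρ α) = C.map ρ (hApp f g m α) := by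
  set β := (Λ[n+1, i.castSucc] : SSet).map ρ α with hβ
  have hβ1 : asOrderHom β.1 = (asOrderHom α.1).comp ρ.unop.toOrderHom := rfl
  have hcc : ∀ (k : ℕ) (hk : k < m'.unop.len + 1),
      k < cut (asOrderHom β.1) ↔ (ρ.unop.toOrderHom ⟨k, hk⟩).val < cut (asOrderHom α.1) := by
    intro k hk
    show (Fin.mk k hk).val < cut (asOrderHom β.1) ↔ _
    rw [lt_cut_iff, lt_cut_iff]
    exact Iff.rfl
  by_cases h0 : cut (asOrderHom α.1) = 0
  · -- everything constant at the top vertex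
    have h0' : cut (asOrderHom β.1) = 0 := by
      by_contra h
      have h2 := (hcc 0 (Nat.succ_pos _)).mp (by omega)
      omega
    rw [hApp_spec0 f g β h0', hApp_spec0 f g α h0, ← FunctorToTypes.map_comp_apply]
    rw [show (Quiver.Hom.op (SimplexCategory.const m.unop ⦋0⦌ 0)) ≫ ρ
      = (Quiver.Hom.op (SimplexCategory.const m'.unop ⦋0⦌ 0)) from
      congrArg Quiver.Hom.op (Subsingleton.elim _ _)]
  · by_cases hA : m.unop.len + 1 ≤ cut (asOrderHom α.1)
    · -- case G: nothing hits the top vertex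
      have hfun : ∀ k, asOrderHom α.1 k ≠ Fin.last (n+1) := fun k =>
        lt_cut_iff.mp (by have := k.isLt; omega)
      have hA' : m'.unop.len + 1 ≤ cut (asOrderHom β.1) := by
        by_contra h
        have h2 := (hcc m'.unop.len (by omega)).mpr
          (by have := (ρ.unop.toOrderHom ⟨m'.unop.len, by omega⟩).isLt; omega)
        omega
      have hfun' : ∀ k, asOrderHom β.1 k ≠ Fin.last (n+1) := fun k =>
        lt_cut_iff.mp (by have := k.isLt; omega)
      rw [hApp_specG f g β hA' hfun', hApp_specG f g α hA hfun,
        ← FunctorToTypes.map_comp_apply]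
      rw [show (Quiver.Hom.op (SimplexCategory.Hom.mk (phiDown (asOrderHom α.1) hfun) :
          m.unop ⟶ ⦋n⦌)) ≫ ρ
        = (Quiver.Hom.op (SimplexCategory.Hom.mk (phiDown (asOrderHom β.1) hfun') :
          m'.unop ⟶ ⦋n⦌)) from
        congrArg Quiver.Hom.op (by
          apply SimplexCategory.Hom.ext
          apply OrderHom.ext
          funext k
          rfl)]
    · -- case F
      have hsp : cut (asOrderHom α.1) - 1 + 1 ≤ m.unop.len := by
        have := cut_le (asOrderHom α.1); omega
      rw [hApp_specF f g α (cut (asOrderHom α.1) - 1) (by omega) hsp (by omega)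
        (phiRes_mem α (by omega) (by omega)),
        ← FunctorToTypes.map_comp_apply]
      by_cases h0' : cut (asOrderHom β.1) = 0
      · rw [hApp_spec0 f g β h0']
        have hconst : (ρ.unop ≫ (SimplexCategory.Hom.mk
              (psiMap m.unop.len (cut (asOrderHom α.1) - 1)) :
              m.unop ⟶ ⦋cut (asOrderHom α.1) - 1 + 1⦌))
            = SimplexCategory.const m'.unop ⦋0⦌ 0 ≫
              SimplexCategory.const ⦋0⦌ ⦋cut (asOrderHom α.1) - 1 + 1⦌ (Fin.last _) := by
          apply SimplexCategory.Hom.ext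
          apply OrderHom.ext
          funext k
          have h2 := hcc k.val k.isLt
          simp only [Fin.eta] at h2
          show psiMap m.unop.len (cut (asOrderHom α.1) - 1) (ρ.unop.toOrderHom k) = _
          rw [psiMap]
          dsimp only [OrderHom.coe_mk]
          rw [dif_neg (by omega)]
          rfl
        rw [show (Quiver.Hom.op (SimplexCategory.Hom.mk
              (psiMap m.unop.len (cut (asOrderHom α.1) - 1)) :
              m.unop ⟶ ⦋cut (asOrderHom α.1) - 1 + 1⦌)) ≫ ρ
            = Quiver.Hom.op (SimplexCategory.const m'.unop ⦋0⦌ 0 ≫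
              SimplexCategory.const ⦋0⦌ ⦋cut (asOrderHom α.1) - 1 + 1⦌ (Fin.last _)) from
          congrArg Quiver.Hom.op hconst]
        rw [op_comp, FunctorToTypes.map_comp_apply]
        exact congrArg (C.map (Quiver.Hom.op (SimplexCategory.const m'.unop ⦋0⦌ 0)))
          ((f.app (op ⦋cut (asOrderHom α.1) - 1⦌) _).2.symm)
      · by_cases hA' : m'.unop.len + 1 ≤ cut (asOrderHom β.1)
        · -- the restricted simplex misses the cone point entirely
          have hfun' : ∀ k, asOrderHom β.1 k ≠ Fin.last (n+1) := fun k =>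
            lt_cut_iff.mp (by have := k.isLt; omega)
          rw [hApp_specG f g β hA' hfun']
          have hlt : ∀ k : Fin (m'.unop.len + 1),
              (ρ.unop.toOrderHom k).val < cut (asOrderHom α.1) := by
            intro k
            have h2 := hcc k.val k.isLt
            simp only [Fin.eta] at h2
            omega
          let ρbar : m'.unop ⟶ ⦋cut (asOrderHom α.1) - 1⦌ := SimplexCategory.Hom.mk
            ⟨fun k => ⟨(ρ.unop.toOrderHom k).val, by have := hlt k; simp only [SimplexCategory.len_mk]; omega⟩,
             fun a b hab => Fin.mk_le_mk.mpr (Fin.le_def.mp (ρ.unop.toOrderHom.monotone hab))⟩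
          have hcomp : (ρ.unop ≫ (SimplexCategory.Hom.mk
                (psiMap m.unop.len (cut (asOrderHom α.1) - 1)) :
                m.unop ⟶ ⦋cut (asOrderHom α.1) - 1 + 1⦌))
              = (ρbar ≫ coconeIncl ⦋cut (asOrderHom α.1) - 1⦌ :
                m'.unop ⟶ ⦋cut (asOrderHom α.1) - 1 + 1⦌) := by
            apply SimplexCategory.Hom.ext
            apply OrderHom.ext
            funext k
            show psiMap m.unop.len (cut (asOrderHom α.1) - 1) (ρ.unop.toOrderHom k) = _
            rw [psiMap]
            dsimp only [OrderHom.coe_mk]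
            rw [dif_pos (by have := hlt k; omega)]
            apply Fin.ext
            rfl
          rw [show (Quiver.Hom.op (SimplexCategory.Hom.mk
                (psiMap m.unop.len (cut (asOrderHom α.1) - 1)) :
                m.unop ⟶ ⦋cut (asOrderHom α.1) - 1 + 1⦌)) ≫ ρ
              = Quiver.Hom.op (ρbar ≫ coconeIncl ⦋cut (asOrderHom α.1) - 1⦌ :
                m'.unop ⟶ ⦋cut (asOrderHom α.1) - 1 + 1⦌) from
            congrArg Quiver.Hom.op hcomp]
          rw [op_comp, FunctorToTypes.map_comp_apply]
          have hover : C.map (coconeIncl ⦋cut (asOrderHom α.1) - 1⦌).op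
              (f.app (op ⦋cut (asOrderHom α.1) - 1⦌)
                ⟨objMk (phiRes (asOrderHom α.1) (cut (asOrderHom α.1) - 1) (by omega)),
                 phiRes_mem α (by omega) (by omega)⟩).1
              = C.map (Quiver.Hom.op (SimplexCategory.Hom.mk
                  (phiRes (asOrderHom α.1) (cut (asOrderHom α.1) - 1) (by omega)) :
                  SimplexCategory.mk (cut (asOrderHom α.1) - 1) ⟶ ⦋n⦌)) (gel g) := by
            have h1 : C.map (coconeIncl ⦋cut (asOrderHom α.1) - 1⦌).op
                (f.app (op ⦋cut (asOrderHom α.1) - 1⦌)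
                  ⟨objMk (phiRes (asOrderHom α.1) (cut (asOrderHom α.1) - 1) (by omega)),
                   phiRes_mem α (by omega) (by omega)⟩).1
                = (f ≫ overProj C x).app (op ⦋cut (asOrderHom α.1) - 1⦌)
                  ⟨objMk (phiRes (asOrderHom α.1) (cut (asOrderHom α.1) - 1) (by omega)),
                   phiRes_mem α (by omega) (by omega)⟩ := rfl
            rw [h1, hw]
            exact app_eq g _ _
          rw [hover, ← FunctorToTypes.map_comp_apply]
          rw [show (Quiver.Hom.op (SimplexCategory.Hom.mk
                (phiRes (asOrderHom α.1) (cut (asOrderHom α.1) - 1) (by omega)) :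
                SimplexCategory.mk (cut (asOrderHom α.1) - 1) ⟶ ⦋n⦌)) ≫ Quiver.Hom.op ρbar
              = Quiver.Hom.op (SimplexCategory.Hom.mk (phiDown (asOrderHom β.1) hfun') :
                m'.unop ⟶ ⦋n⦌) from
            congrArg Quiver.Hom.op (by
              apply SimplexCategory.Hom.ext
              apply OrderHom.ext
              funext k
              rfl)]
        · -- both are genuine cone simplices: use naturality of `f`
          rw [hApp_specF f g β (cut (asOrderHom β.1) - 1) (by omega)
            (by have := cut_le (asOrderHom β.1); omega) (by omega)
            (phiRes_mem β (by omega) (by omega))]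
          have hk1 : ∀ k : Fin (cut (asOrderHom β.1) - 1 + 1), k.val < m'.unop.len + 1 := by
            intro k
            have := k.isLt
            omega
          have hk2 : ∀ k : Fin (cut (asOrderHom β.1) - 1 + 1),
              (ρ.unop.toOrderHom ⟨k.val, hk1 k⟩).val < cut (asOrderHom α.1) - 1 + 1 := by
            intro k
            have h2 := hcc k.val (hk1 k)
            have := k.isLt
            omega
          set ρhat : SimplexCategory.mk (cut (asOrderHom β.1) - 1) ⟶
              SimplexCategory.mk (cut (asOrderHom α.1) - 1) :=
            SimplexCategory.Hom.mk ⟨fun k => ⟨(ρ.unop.toOrderHom ⟨k.val, hk1 k⟩).val, hk2 k⟩,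
              fun a b hab => Fin.mk_le_mk.mpr (Fin.le_def.mp (ρ.unop.toOrderHom.monotone
                (Fin.mk_le_mk.mpr (Fin.le_def.mp hab))))⟩ with hρhat
          have Bmap : (Λ[n, i] : SSet).map (Quiver.Hom.op ρhat)
              ⟨objMk (phiRes (asOrderHom α.1) (cut (asOrderHom α.1) - 1) (by omega)),
               phiRes_mem α (by omega) (by omega)⟩
              = ⟨objMk (phiRes (asOrderHom β.1) (cut (asOrderHom β.1) - 1) (by omega)),
               phiRes_mem β (by omega) (by omega)⟩ := by
            apply Subtype.ext
            apply (stdSimplex.objEquiv).injective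
            apply SimplexCategory.Hom.ext
            apply OrderHom.ext
            funext k
            rfl
          have hnat := NatTrans.naturality_apply f (Quiver.Hom.op ρhat)
            ⟨objMk (phiRes (asOrderHom α.1) (cut (asOrderHom α.1) - 1) (by omega)),
             phiRes_mem α (by omega) (by omega)⟩
          rw [Bmap] at hnat
          rw [hnat]
          rw [show ((over' C x).map (Quiver.Hom.op ρhat)
              (f.app (op ⦋cut (asOrderHom α.1) - 1⦌)
                ⟨objMk (phiRes (asOrderHom α.1) (cut (asOrderHom α.1) - 1) (by omega)),
                 phiRes_mem α (by omega) (by omega)⟩)).1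
            = C.map (Quiver.Hom.op (coconeHom ρhat))
              (f.app (op ⦋cut (asOrderHom α.1) - 1⦌)
                ⟨objMk (phiRes (asOrderHom α.1) (cut (asOrderHom α.1) - 1) (by omega)),
                 phiRes_mem α (by omega) (by omega)⟩).1 from rfl]
          rw [← FunctorToTypes.map_comp_apply]
          have claim4 : (SimplexCategory.Hom.mk
                (psiMap m'.unop.len (cut (asOrderHom β.1) - 1)) :
                m'.unop ⟶ ⦋cut (asOrderHom β.1) - 1 + 1⦌) ≫ coconeHom ρhat
              = ρ.unop ≫ (SimplexCategory.Hom.mk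
                (psiMap m.unop.len (cut (asOrderHom α.1) - 1)) :
                m.unop ⟶ ⦋cut (asOrderHom α.1) - 1 + 1⦌) := by
            apply SimplexCategory.Hom.ext
            apply OrderHom.ext
            funext k
            apply Fin.ext
            have h2 := hcc k.val k.isLt
            simp only [Fin.eta] at h2
            have hL : (((SimplexCategory.Hom.mk
                  (psiMap m'.unop.len (cut (asOrderHom β.1) - 1)) :
                  m'.unop ⟶ ⦋cut (asOrderHom β.1) - 1 + 1⦌) ≫ coconeHom ρhat).toOrderHom k).val
                = if k.val < cut (asOrderHom β.1) then (ρ.unop.toOrderHom k).val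
                  else cut (asOrderHom α.1) - 1 + 1 := by
              show ((coconeHom ρhat).toOrderHom
                (psiMap m'.unop.len (cut (asOrderHom β.1) - 1) k)).val = _
              rw [coconeHom_apply_val]
              by_cases hk : k.val < cut (asOrderHom β.1)
              · rw [if_pos hk]
                have e1 : (psiMap m'.unop.len (cut (asOrderHom β.1) - 1) k)
                    = ⟨k.val, by omega⟩ := by
                  rw [psiMap]
                  dsimp only [OrderHom.coe_mk]
                  rw [dif_pos (by omega)]
                rw [e1, dif_pos (by simp only [SimplexCategory.len_mk]; omega)]
                rfl
              · rw [if_neg hk]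
                have e1 : (psiMap m'.unop.len (cut (asOrderHom β.1) - 1) k)
                    = Fin.last _ := by
                  rw [psiMap]
                  dsimp only [OrderHom.coe_mk]
                  rw [dif_neg (by omega)]
                rw [e1, dif_neg (by simp only [SimplexCategory.len_mk, Fin.val_last]; omega)]
            have hR : (((ρ.unop ≫ (SimplexCategory.Hom.mk
                  (psiMap m.unop.len (cut (asOrderHom α.1) - 1)) :
                  m.unop ⟶ ⦋cut (asOrderHom α.1) - 1 + 1⦌))).toOrderHom k).val
                = if k.val < cut (asOrderHom β.1) then (ρ.unop.toOrderHom k).val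
                  else cut (asOrderHom α.1) - 1 + 1 := by
              show (psiMap m.unop.len (cut (asOrderHom α.1) - 1) (ρ.unop.toOrderHom k)).val = _
              by_cases hk : k.val < cut (asOrderHom β.1)
              · rw [if_pos hk, psiMap]
                dsimp only [OrderHom.coe_mk]
                rw [dif_pos (by omega)]
              · rw [if_neg hk, psiMap]
                dsimp only [OrderHom.coe_mk]
                rw [dif_neg (by omega)]
                rfl
            rw [hL]
            exact hR.symm
          rw [show (Quiver.Hom.op (coconeHom ρhat)) ≫ (Quiver.Hom.op (SimplexCategory.Hom.mk
                (psiMap m'.unop.len (cut (asOrderHom β.1) - 1)) :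
                m'.unop ⟶ ⦋cut (asOrderHom β.1) - 1 + 1⦌))
              = (Quiver.Hom.op (SimplexCategory.Hom.mk
                (psiMap m.unop.len (cut (asOrderHom α.1) - 1)) :
                m.unop ⟶ ⦋cut (asOrderHom α.1) - 1 + 1⦌)) ≫ ρ from
            congrArg Quiver.Hom.op claim4]

lemma cut_coconeHom {a : SimplexCategory} (ψ : a ⟶ ⦋n⦌) :
    cut ((coconeHom ψ).toOrderHom : Fin (a.len + 2) →o Fin (n + 2)) = a.len + 1 := by
  apply le_antisymm
  · by_contra h
    have h2 := lt_cut_iff.mp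
      (show (Fin.last (a.len+1)).val < cut ((coconeHom ψ).toOrderHom : Fin (a.len + 2) →o
        Fin (n + 2)) by simp only [Fin.val_last]; omega)
    exact h2 (coconeHom_apply_last ψ)
  · have h2 : (coconeHom ψ).toOrderHom (Fin.castSucc (Fin.last a.len)) ≠ Fin.last (n+1) := by
      rw [coconeHom_apply_castSucc]
      exact Fin.ne_last_of_lt (Fin.castSucc_lt_last _)
    have h3 := lt_cut_iff.mpr h2
    simpa only [Fin.coe_castSucc, Fin.val_last, Nat.add_one_le_iff] using h3

/-- The horn map determined by the commutative square. -/
def hmap (hw : f ≫ overProj C x = Λ[n, i].ι ≫ g) :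
    (Λ[n+1, i.castSucc] : SSet) ⟶ C where
  app m := TypeCat.ofHom (hApp f g m)
  naturality m m' ρ := ConcreteCategory.hom_ext _ _ fun α => hApp_natural f g hw m m' ρ α

lemma key (hw : f ≫ overProj C x = Λ[n, i].ι ≫ g) (σ : Δ[n+1] ⟶ C)
    (hσ : hmap f g hw = Λ[n+1, i.castSucc].ι ≫ σ)
    {m : SimplexCategoryᵒᵖ} (E : (Λ[n+1, i.castSucc] : SSet.{u}).obj m) :
    C.map ((stdSimplex.objEquiv) E.1).op
      (σ.app (op ⦋n+1⦌) (stdSimplex.id (n+1))) = hApp f g m E := by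
  show _ = (hmap f g hw).app m E
  rw [hσ]
  exact (app_eq σ m E.1).symm

/-- The lift `Δ[n] ⟶ C_{/x}` determined by a filler of the big horn. -/
def liftMap (τ : C.obj (op ⦋n+1⦌))
    (hτ : C.map (SimplexCategory.const ⦋0⦌ ⦋n+1⦌ (Fin.last _)).op τ = x) :
    Δ[n] ⟶ over' C x where
  app m := TypeCat.ofHom fun β => ⟨C.map (Quiver.Hom.op (coconeHom ((stdSimplex.objEquiv) β))) τ, by
    rw [← FunctorToTypes.map_comp_apply, ← op_comp, const_comp_coconeHom]
    exact hτ⟩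
  naturality m m' ρ := by
    refine ConcreteCategory.hom_ext _ _ fun β => ?_
    apply Subtype.ext
    show C.map (Quiver.Hom.op (coconeHom ((stdSimplex.objEquiv) (Δ[n].map ρ β)))) τ = _
    have he : (stdSimplex.objEquiv) (Δ[n].map ρ β)
        = ρ.unop ≫ (stdSimplex.objEquiv) β := by
      rw [stdSimplex.map_apply, Equiv.apply_symm_apply]
    rw [he, coconeHom_comp, op_comp, FunctorToTypes.map_comp_apply]
    rfl

end

end RFib

/-- For a quasicategory `C` and an object `x`, the projection `C_{/x} ⟶ C` from the
overcategory is a right fibration. -/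
theorem isRightFibration_overProj (C : SSet.{u}) [Quasicategory C] (x : C _⦋0⦌) :
    IsRightFibration (overProj C x) := by
  intro n i hn hi
  constructor
  intro f g sq
  have hw := sq.w
  have h0c : (0 : Fin (n+2)) < i.castSucc := by
    rw [Fin.lt_def]
    simpa using hi
  have hlc : i.castSucc < Fin.last (n+1) := by
    rw [Fin.lt_def]
    simpa using i.isLt
  obtain ⟨σ, hσ⟩ := Quasicategory.hornFilling h0c hlc (RFib.hmap f g hw)
  have mem0 : Set.range (stdSimplex.asOrderHom ((stdSimplex.objMk (n := ⦋n+1⦌) (m := op ⦋0⦌)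
      (OrderHom.const _ (Fin.last (n+1)))) : Δ[n+1].obj (op ⦋0⦌))) ∪ {i.castSucc}
      ≠ Set.univ := by
    apply RFib.horn_mk _ 0
    · intro k hk
      have hv : (Fin.last (n+1)).val = (0 : Fin (n+2)).val := congrArg Fin.val hk
      simp at hv
    · intro h
      have hv : (0 : ℕ) = i.val := congrArg Fin.val h
      omega
  have hcut0 : RFib.cut (stdSimplex.asOrderHom ((stdSimplex.objMk (n := ⦋n+1⦌) (m := op ⦋0⦌)
      (OrderHom.const _ (Fin.last (n+1)))) : Δ[n+1].obj (op ⦋0⦌))) = 0 := by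
    by_contra h
    exact (RFib.lt_cut_iff (φ := stdSimplex.asOrderHom ((stdSimplex.objMk (n := ⦋n+1⦌) (m := op ⦋0⦌)
      (OrderHom.const _ (Fin.last (n+1)))) : Δ[n+1].obj (op ⦋0⦌)))
      (k := ⟨0, Nat.succ_pos _⟩)).mp (by show (0:ℕ) < _; omega) rfl
  have hτ : C.map (SimplexCategory.const ⦋0⦌ ⦋n+1⦌ (Fin.last _)).op
      (σ.app (op ⦋n+1⦌) (stdSimplex.id (n+1))) = x := by
    have hk2 : C.map (SimplexCategory.const ⦋0⦌ ⦋n+1⦌ (Fin.last _)).op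
        (σ.app (op ⦋n+1⦌) (stdSimplex.id (n+1)))
        = RFib.hApp f g (op ⦋0⦌) ⟨_, mem0⟩ := RFib.key f g hw σ hσ ⟨_, mem0⟩
    rw [hk2, RFib.hApp_spec0 f g ⟨_, mem0⟩ hcut0, SimplexCategory.const_eq_id, op_id,
      FunctorToTypes.map_id_apply]
  refine ⟨⟨⟨RFib.liftMap (σ.app (op ⦋n+1⦌) (stdSimplex.id (n+1))) hτ, ?_, ?_⟩⟩⟩
  · -- fac_left
    apply hom_ext
    intro m
    refine ConcreteCategory.hom_ext _ _ fun α => ?_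
    apply Subtype.ext
    show C.map (Quiver.Hom.op (coconeHom ((stdSimplex.objEquiv) α.1)))
      (σ.app (op ⦋n+1⦌) (stdSimplex.id (n+1))) = (f.app m α).1
    obtain ⟨w, hw1, hw2⟩ := RFib.horn_exists α
    have memE : Set.range (stdSimplex.asOrderHom ((stdSimplex.objEquiv (n := ⦋n+1⦌) (m := op ⦋m.unop.len + 1⦌)).symm
        (coconeHom ((stdSimplex.objEquiv) α.1)))) ∪ {i.castSucc} ≠ Set.univ := by
      apply RFib.horn_mk _ w.castSucc
      · intro k hk
        have hv : ((coconeHom ((stdSimplex.objEquiv) α.1)).toOrderHom k).val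
            = (w.castSucc).val := congrArg Fin.val hk
        rw [RFib.coconeHom_apply_val] at hv
        by_cases hkk : k.val < m.unop.len + 1
        · rw [dif_pos hkk] at hv
          exact hw1 ⟨k.val, hkk⟩ (Fin.ext (by simp at hv; exact hv))
        · rw [dif_neg hkk] at hv
          have := w.isLt
          simp only [SimplexCategory.len_mk, Fin.coe_castSucc] at hv
          omega
      · intro h
        exact hw2 (Fin.castSucc_injective _ h)
    have hkey : C.map (Quiver.Hom.op (coconeHom ((stdSimplex.objEquiv) α.1)))
        (σ.app (op ⦋n+1⦌) (stdSimplex.id (n+1)))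
        = RFib.hApp f g (op ⦋m.unop.len + 1⦌) ⟨_, memE⟩ := RFib.key f g hw σ hσ ⟨_, memE⟩
    rw [hkey]
    have hcutE : RFib.cut (stdSimplex.asOrderHom ((stdSimplex.objEquiv (n := ⦋n+1⦌) (m := op ⦋m.unop.len + 1⦌)).symm
        (coconeHom ((stdSimplex.objEquiv) α.1)))) = m.unop.len + 1 :=
      RFib.cut_coconeHom ((stdSimplex.objEquiv) α.1)
    rw [RFib.hApp_specF f g (⟨(stdSimplex.objEquiv (n := ⦋n+1⦌) (m := op ⦋m.unop.len + 1⦌)).symm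
        (coconeHom ((stdSimplex.objEquiv) α.1)), memE⟩ :
        (Λ[n+1, i.castSucc] : SSet.{u}).obj (op ⦋m.unop.len + 1⦌)) m.unop.len hcutE
      (by simp only [unop_op, SimplexCategory.len_mk]; omega)
      (by
        have h5 : RFib.cut (stdSimplex.asOrderHom ((⟨(stdSimplex.objEquiv (n := ⦋n+1⦌) (m := op ⦋m.unop.len + 1⦌)).symm (coconeHom ((stdSimplex.objEquiv (n := ⦋n⦌) (m := m)) α.1)),
          memE⟩ : (Λ[n+1, i.castSucc] : SSet.{u}).obj (op ⦋m.unop.len + 1⦌)).1))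
          = m.unop.len + 1 := hcutE
        omega)
      (RFib.phiRes_mem (⟨(stdSimplex.objEquiv (n := ⦋n+1⦌) (m := op ⦋m.unop.len + 1⦌)).symm
          (coconeHom ((stdSimplex.objEquiv (n := ⦋n⦌) (m := m)) α.1)), memE⟩ :
          (Λ[n+1, i.castSucc] : SSet.{u}).obj (op ⦋m.unop.len + 1⦌))
        (by
          have h5 : RFib.cut (stdSimplex.asOrderHom ((⟨(stdSimplex.objEquiv (n := ⦋n+1⦌) (m := op ⦋m.unop.len + 1⦌)).symm (coconeHom ((stdSimplex.objEquiv (n := ⦋n⦌) (m := m)) α.1)),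
          memE⟩ : (Λ[n+1, i.castSucc] : SSet.{u}).obj (op ⦋m.unop.len + 1⦌)).1))
          = m.unop.len + 1 := hcutE
          omega)
        (by
          have h5 : RFib.cut (stdSimplex.asOrderHom ((⟨(stdSimplex.objEquiv (n := ⦋n+1⦌) (m := op ⦋m.unop.len + 1⦌)).symm (coconeHom ((stdSimplex.objEquiv (n := ⦋n⦌) (m := m)) α.1)),
          memE⟩ : (Λ[n+1, i.castSucc] : SSet.{u}).obj (op ⦋m.unop.len + 1⦌)).1))
          = m.unop.len + 1 := hcutE
          simp only [unop_op, SimplexCategory.len_mk]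
          omega))]
    have hpsi : (SimplexCategory.Hom.mk
        (RFib.psiMap (op ⦋m.unop.len + 1⦌ : SimplexCategoryᵒᵖ).unop.len m.unop.len) :
        (op ⦋m.unop.len + 1⦌ : SimplexCategoryᵒᵖ).unop ⟶ ⦋m.unop.len + 1⦌)
        = 𝟙 (⦋m.unop.len + 1⦌ : SimplexCategory) := by
      apply SimplexCategory.Hom.ext
      apply OrderHom.ext
      funext k
      apply Fin.ext
      show (RFib.psiMap _ _ k).val = k.val
      rw [RFib.psiMap]
      dsimp only [OrderHom.coe_mk]
      by_cases hkk : k.val < m.unop.len + 1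
      · rw [dif_pos hkk]
      · rw [dif_neg hkk]
        have := k.isLt
        simp only [unop_op, SimplexCategory.len_mk] at this
        simp only [Fin.val_last]
        omega
    rw [hpsi, op_id, FunctorToTypes.map_id_apply]
    have hBα : ∀ (B : (Λ[n, i] : SSet.{u}).obj m), B.1 = α.1 →
        (f.app m B).1 = (f.app m α).1 := by
      intro B hB
      rw [Subtype.ext hB]
    apply hBα
    apply (stdSimplex.objEquiv).injective
    apply SimplexCategory.Hom.ext
    apply OrderHom.ext
    funext k
    apply Fin.ext
    have hkv : k.val < m.unop.len + 2 := by
      have := k.isLt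
      omega
    show ((coconeHom ((stdSimplex.objEquiv) α.1)).toOrderHom
      ⟨k.val, hkv⟩).val = (stdSimplex.asOrderHom α.1 k).val
    rw [RFib.coconeHom_apply_val,
      dif_pos (show (⟨k.val, hkv⟩ : Fin (m.unop.len + 2)).val < m.unop.len + 1 by
        show k.val < _
        have := k.isLt
        omega)]
    rfl
  · -- fac_right
    apply hom_ext
    intro m
    refine ConcreteCategory.hom_ext _ _ fun β => ?_
    show C.map (coconeIncl m.unop).op
      (C.map (Quiver.Hom.op (coconeHom ((stdSimplex.objEquiv) β)))
        (σ.app (op ⦋n+1⦌) (stdSimplex.id (n+1)))) = g.app m β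
    rw [← FunctorToTypes.map_comp_apply, ← op_comp, coconeIncl_naturality, op_comp,
      FunctorToTypes.map_comp_apply]
    have mem1 : Set.range (stdSimplex.asOrderHom ((stdSimplex.objEquiv (n := ⦋n+1⦌) (m := op ⦋n⦌)).symm
        (coconeIncl ⦋n⦌))) ∪ {i.castSucc} ≠ Set.univ := by
      apply RFib.horn_mk _ (Fin.last (n+1))
      · intro k hk
        have hv : (Fin.castSucc k).val = (Fin.last (n+1)).val := congrArg Fin.val hk
        have := k.isLt
        simp only [Fin.coe_castSucc, Fin.val_last] at hv
        simp only [SimplexCategory.len_mk] at this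
        omega
      · intro h
        have hv : (n+1 : ℕ) = i.val := congrArg Fin.val h
        have := i.isLt
        omega
    have hkey : C.map (Quiver.Hom.op (coconeIncl ⦋n⦌))
        (σ.app (op ⦋n+1⦌) (stdSimplex.id (n+1)))
        = RFib.hApp f g (op ⦋n⦌) ⟨_, mem1⟩ := RFib.key f g hw σ hσ ⟨_, mem1⟩
    rw [hkey]
    have hfun : ∀ k, stdSimplex.asOrderHom ((⟨_, mem1⟩ :
        (Λ[n+1, i.castSucc] : SSet.{u}).obj (op ⦋n⦌)).1) k ≠ Fin.last (n+1) := by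
      intro k hk
      have hv : (Fin.castSucc k).val = (Fin.last (n+1)).val := congrArg Fin.val hk
      have := k.isLt
      simp only [Fin.coe_castSucc, Fin.val_last] at hv
      simp only [SimplexCategory.len_mk] at this
      omega
    have hA : (op ⦋n⦌ : SimplexCategoryᵒᵖ).unop.len + 1 ≤ RFib.cut (stdSimplex.asOrderHom ((⟨_, mem1⟩ :
        (Λ[n+1, i.castSucc] : SSet.{u}).obj (op ⦋n⦌)).1)) := by
      have h3 := RFib.lt_cut_iff.mpr
        (hfun ⟨(op ⦋n⦌ : SimplexCategoryᵒᵖ).unop.len, by omega⟩)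
      exact h3
    rw [RFib.hApp_specG f g _ hA hfun]
    have hid : (SimplexCategory.Hom.mk (RFib.phiDown (stdSimplex.asOrderHom ((⟨_, mem1⟩ :
        (Λ[n+1, i.castSucc] : SSet.{u}).obj (op ⦋n⦌)).1)) hfun) :
        (op ⦋n⦌ : SimplexCategoryᵒᵖ).unop ⟶ ⦋n⦌) = 𝟙 (⦋n⦌ : SimplexCategory) := by
      apply SimplexCategory.Hom.ext
      apply OrderHom.ext
      funext k
      apply Fin.ext
      show ((Fin.castSucc k).castPred (hfun k)).val = k.val
      rfl
    rw [hid, op_id, FunctorToTypes.map_id_apply]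
    exact (RFib.app_eq g m β).symm
end
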